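/- Let E be a bipartite channel on two qubits (d_A = d_B = 2) and define, for unit Bloch vector b, the local channels E_{±b}(ρ) = tr_B[E(ρ ⊗ (1/2)(I_B ± b·σ))]. Then the sub-unitarity satisfies u_{A→A}(E) ≤ (1/2)(u(E_{+b}) + u(E_{−b})), with equality when E is a product channel. -/

import Mathlib

open Matrix Kronecker ComplexOrder

/-- The Choi matrix of a linear map on matrices; the map is completely positive
iff this matrix is positive semidefinite. -/
noncomputable def choi {ι κ : Type*} [Fintype ι] [DecidableEq ι]
    (E : Matrix ι ι ℂ →ₗ[ℂ] Matrix κ κ ℂ) : Matrix (κ × ι) (κ × ι) ℂ :=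
  Matrix.of fun p q => E (Matrix.single p.2 q.2 1) p.1 q.1

/-- Partial trace over the second tensor factor. -/
noncomputable def ptraceB {m n : Type*} [Fintype n]
    (ρ : Matrix (m × n) (m × n) ℂ) : Matrix m m ℂ :=
  Matrix.of fun i j => ∑ k, ρ (i, k) (j, k)

/-- The Pauli matrices. -/
noncomputable def pauli : Fin 3 → Matrix (Fin 2) (Fin 2) ℂ
  | 0 => !![0, 1; 1, 0]
  | 1 => !![0, -Complex.I; Complex.I, 0]
  | 2 => !![1, 0; 0, -1]

/-- Hilbert–Schmidt-normalized Pauli basis element `σ_i/√2`. -/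
noncomputable def pauliN (i : Fin 3) : Matrix (Fin 2) (Fin 2) ℂ :=
  ((Real.sqrt 2 : ℂ))⁻¹ • pauli i

/-- The normalized identity `I/√2` on a qubit. -/
noncomputable def qubitId : Matrix (Fin 2) (Fin 2) ℂ :=
  ((Real.sqrt 2 : ℂ))⁻¹ • 1

/-- The unitarity `u(F) = tr[T_F†T_F]/3` of a qubit map, via its unital Pauli block. -/
noncomputable def unitarity (F : Matrix (Fin 2) (Fin 2) ℂ → Matrix (Fin 2) (Fin 2) ℂ) : ℝ :=
  (1 / 3 : ℝ) * ∑ i, ∑ j, ‖((pauliN i)ᴴ * F (pauliN j)).trace‖ ^ 2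

/-- The qubit state `(1/2)(I + b·σ)` with Bloch vector `b`, scaled by sign `ε`. -/
noncomputable def blochState (ε : ℝ) (b : Fin 3 → ℝ) : Matrix (Fin 2) (Fin 2) ℂ :=
  ((2 : ℂ))⁻¹ • ((1 : Matrix (Fin 2) (Fin 2) ℂ) + (ε : ℂ) • ∑ i, (b i : ℂ) • pauli i)

/-- The local channel `E_{±b}(ρ) = tr_B[E(ρ ⊗ (1/2)(I ± b·σ))]`. -/
noncomputable def localBloch
    (E : Matrix (Fin 2 × Fin 2) (Fin 2 × Fin 2) ℂ →ₗ[ℂ]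
         Matrix (Fin 2 × Fin 2) (Fin 2 × Fin 2) ℂ)
    (ε : ℝ) (b : Fin 3 → ℝ)
    (ρ : Matrix (Fin 2) (Fin 2) ℂ) : Matrix (Fin 2) (Fin 2) ℂ :=
  ptraceB (E (ρ ⊗ₖ blochState ε b))

/-- The sub-unitarity `u_{A→A}(E)` of a two-qubit channel in the normalized Pauli basis. -/
noncomputable def uAA
    (E : Matrix (Fin 2 × Fin 2) (Fin 2 × Fin 2) ℂ →ₗ[ℂ]
         Matrix (Fin 2 × Fin 2) (Fin 2 × Fin 2) ℂ) : ℝ :=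
  (1 / 3 : ℝ) * ∑ i, ∑ j,
    ‖((pauliN i ⊗ₖ qubitId)ᴴ * E (pauliN j ⊗ₖ qubitId)).trace‖ ^ 2

/-! ### Auxiliary lemmas -/

noncomputable def Yb (b : Fin 3 → ℝ) : Matrix (Fin 2) (Fin 2) ℂ :=
  ((Real.sqrt 2 : ℂ))⁻¹ • ∑ i, (b i : ℂ) • pauli i

lemma sqrt2_mul_self : ((Real.sqrt 2 : ℂ))⁻¹ * ((Real.sqrt 2 : ℂ))⁻¹ = (2 : ℂ)⁻¹ := by
  have h : ((Real.sqrt 2 : ℝ) : ℂ) * ((Real.sqrt 2 : ℝ) : ℂ) = 2 := by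
    norm_cast
    exact Real.mul_self_sqrt (by norm_num)
  rw [← mul_inv, h]

lemma parallelogram (z w : ℂ) : ‖z + w‖ ^ 2 + ‖z - w‖ ^ 2 = 2 * (‖z‖ ^ 2 + ‖w‖ ^ 2) := by
  simp only [Complex.sq_norm, Complex.normSq_apply,
    Complex.add_re, Complex.add_im, Complex.sub_re, Complex.sub_im]
  ring

lemma ptraceB_add (M N : Matrix (Fin 2 × Fin 2) (Fin 2 × Fin 2) ℂ) :
    ptraceB (M + N) = ptraceB M + ptraceB N := by
  ext i j; simp [ptraceB, Finset.sum_add_distrib]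

lemma ptraceB_smul (c : ℂ) (M : Matrix (Fin 2 × Fin 2) (Fin 2 × Fin 2) ℂ) :
    ptraceB (c • M) = c • ptraceB M := by
  ext i j; simp [ptraceB, Finset.mul_sum]; ring

lemma trace_mul_ptraceB (X : Matrix (Fin 2) (Fin 2) ℂ)
    (M : Matrix (Fin 2 × Fin 2) (Fin 2 × Fin 2) ℂ) :
    (X * ptraceB M).trace = ((X ⊗ₖ (1 : Matrix (Fin 2) (Fin 2) ℂ)) * M).trace := by
  simp only [Matrix.trace, Matrix.diag, Matrix.mul_apply, ptraceB, Matrix.of_apply,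
    Matrix.kroneckerMap_apply, Fintype.sum_prod_type, Matrix.one_apply]
  simp [Finset.mul_sum]
  ring

lemma kron_conjTranspose (X Y : Matrix (Fin 2) (Fin 2) ℂ) :
    (X ⊗ₖ Y)ᴴ = Xᴴ ⊗ₖ Yᴴ := by
  ext ⟨i, k⟩ ⟨j, l⟩
  simp [Matrix.conjTranspose_apply, Matrix.kroneckerMap_apply]

lemma qubitId_conjTranspose : qubitIdᴴ = qubitId := by
  simp [qubitId, Matrix.conjTranspose_smul, Complex.star_def, Complex.conj_ofReal]

lemma blochState_eq (ε : ℝ) (b : Fin 3 → ℝ) :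
    blochState ε b = ((Real.sqrt 2 : ℂ))⁻¹ • qubitId
      + ((ε : ℂ) * ((Real.sqrt 2 : ℂ))⁻¹) • Yb b := by
  unfold blochState qubitId Yb
  simp only [smul_add, smul_smul, mul_assoc, sqrt2_mul_self]
  rw [mul_comm]

lemma kron_bloch (ε : ℝ) (b : Fin 3 → ℝ) (ρ : Matrix (Fin 2) (Fin 2) ℂ) :
    ρ ⊗ₖ blochState ε b = ((Real.sqrt 2 : ℂ))⁻¹ • (ρ ⊗ₖ qubitId)
      + ((ε : ℂ) * ((Real.sqrt 2 : ℂ))⁻¹) • (ρ ⊗ₖ Yb b) := by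
  rw [blochState_eq, Matrix.kronecker_add, Matrix.kronecker_smul, Matrix.kronecker_smul]

/-- `((X ⊗ₖ qubitId)ᴴ * N).trace = (√2)⁻¹ * (Xᴴ * ptraceB N).trace`. -/
lemma trace_kron_qubitId (X : Matrix (Fin 2) (Fin 2) ℂ)
    (N : Matrix (Fin 2 × Fin 2) (Fin 2 × Fin 2) ℂ) :
    ((X ⊗ₖ qubitId)ᴴ * N).trace = ((Real.sqrt 2 : ℂ))⁻¹ * (Xᴴ * ptraceB N).trace := by
  rw [kron_conjTranspose, qubitId_conjTranspose, trace_mul_ptraceB]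
  show ((Xᴴ ⊗ₖ (((Real.sqrt 2 : ℂ))⁻¹ • (1 : Matrix (Fin 2) (Fin 2) ℂ))) * N).trace = _
  rw [Matrix.kronecker_smul, Matrix.smul_mul, Matrix.trace_smul, smul_eq_mul]

lemma pauli_trace (i : Fin 3) : (pauli i).trace = 0 := by
  fin_cases i <;> simp [pauli, Matrix.trace_fin_two]

/-- For a two-qubit channel `E` and a unit Bloch vector `b`, the sub-unitarity satisfies
`u_{A→A}(E) ≤ (1/2)(u(E_{+b}) + u(E_{−b}))`, with equality when `E` is a product
channel. -/
theorem subunitarity_bloch_reset_bound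
    (E : Matrix (Fin 2 × Fin 2) (Fin 2 × Fin 2) ℂ →ₗ[ℂ]
         Matrix (Fin 2 × Fin 2) (Fin 2 × Fin 2) ℂ)
    (hCP : (choi E).PosSemidef) (hTP : ∀ ρ, (E ρ).trace = ρ.trace)
    (b : Fin 3 → ℝ) (hb : ∑ i, b i ^ 2 = 1) :
    uAA E ≤ (1 / 2 : ℝ) * (unitarity (localBloch E 1 b) + unitarity (localBloch E (-1) b))
    ∧
    (∀ (EA EB : Matrix (Fin 2) (Fin 2) ℂ →ₗ[ℂ] Matrix (Fin 2) (Fin 2) ℂ),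
        (choi EA).PosSemidef → (∀ ρ, (EA ρ).trace = ρ.trace) →
        (choi EB).PosSemidef → (∀ ρ, (EB ρ).trace = ρ.trace) →
        (∀ (MA MB : Matrix (Fin 2) (Fin 2) ℂ), E (MA ⊗ₖ MB) = (EA MA) ⊗ₖ (EB MB)) →
        uAA E = (1 / 2 : ℝ) *
          (unitarity (localBloch E 1 b) + unitarity (localBloch E (-1) b))) := by
  set s : ℂ := ((Real.sqrt 2 : ℂ))⁻¹ with hs
  set A : Fin 3 → Fin 3 → ℂ :=
    fun i j => ((pauliN i ⊗ₖ qubitId)ᴴ * E (pauliN j ⊗ₖ qubitId)).trace with hA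
  set B : Fin 3 → Fin 3 → ℂ :=
    fun i j => ((pauliN i ⊗ₖ qubitId)ᴴ * E (pauliN j ⊗ₖ Yb b)).trace with hB
  have key : ∀ (ε : ℝ) (i j : Fin 3),
      ((pauliN i)ᴴ * localBloch E ε b (pauliN j)).trace = A i j + (ε : ℂ) * B i j := by
    intro ε i j
    unfold localBloch
    rw [kron_bloch, map_add, _root_.map_smul, _root_.map_smul, ptraceB_add, ptraceB_smul, ptraceB_smul,
      Matrix.mul_add, Matrix.mul_smul, Matrix.mul_smul, Matrix.trace_add, Matrix.trace_smul,
      Matrix.trace_smul, hA, hB]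
    simp only
    rw [trace_kron_qubitId, trace_kron_qubitId, smul_eq_mul, smul_eq_mul]
    ring
  have ukey : ∀ ε : ℝ, unitarity (localBloch E ε b)
      = (1 / 3 : ℝ) * ∑ i, ∑ j, ‖A i j + (ε : ℂ) * B i j‖ ^ 2 := by
    intro ε
    unfold unitarity
    congr 1
    refine Finset.sum_congr rfl fun i _ => Finset.sum_congr rfl fun j _ => ?_
    rw [key]
  have huAA : uAA E = (1 / 3 : ℝ) * ∑ i, ∑ j, ‖A i j‖ ^ 2 := rfl
  have hRHS : (1 / 2 : ℝ) * (unitarity (localBloch E 1 b) + unitarity (localBloch E (-1) b))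
      = (1 / 3 : ℝ) * ∑ i, ∑ j, (‖A i j‖ ^ 2 + ‖B i j‖ ^ 2) := by
    rw [ukey 1, ukey (-1)]
    push_cast
    have hsum : ∀ i j : Fin 3, ‖A i j + 1 * B i j‖ ^ 2 + ‖A i j + (-1) * B i j‖ ^ 2
        = 2 * (‖A i j‖ ^ 2 + ‖B i j‖ ^ 2) := by
      intro i j
      rw [one_mul, neg_one_mul, ← sub_eq_add_neg]
      exact parallelogram _ _
    have h1 : (∑ i, ∑ j, ‖A i j + 1 * B i j‖ ^ 2) + ∑ i, ∑ j, ‖A i j + (-1 : ℂ) * B i j‖ ^ 2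
        = 2 * ∑ i, ∑ j, (‖A i j‖ ^ 2 + ‖B i j‖ ^ 2) := by
      rw [← Finset.sum_add_distrib, Finset.mul_sum]
      refine Finset.sum_congr rfl fun i _ => ?_
      rw [← Finset.sum_add_distrib, Finset.mul_sum]
      exact Finset.sum_congr rfl fun j _ => hsum i j
    linarith
  constructor
  · rw [huAA, hRHS]
    have : (∑ i, ∑ j, ‖A i j‖ ^ 2) ≤ ∑ i, ∑ j, (‖A i j‖ ^ 2 + ‖B i j‖ ^ 2) := by
      gcongr with i _ j _
      exact le_add_of_nonneg_right (by positivity)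
    linarith
  · intro EA EB _ _ _ hTPB hprod
    have hB0 : ∀ i j : Fin 3, B i j = 0 := by
      intro i j
      rw [hB]
      simp only
      rw [hprod, kron_conjTranspose, ← Matrix.mul_kronecker_mul, Matrix.trace_kronecker]
      have hYb : (Yb b).trace = 0 := by
        simp [Yb, Matrix.trace_smul, Matrix.trace_sum, pauli_trace]
      have : (qubitIdᴴ * EB (Yb b)).trace = 0 := by
        rw [qubitId_conjTranspose]
        show ((s • (1 : Matrix (Fin 2) (Fin 2) ℂ)) * EB (Yb b)).trace = 0
        rw [Matrix.smul_mul, Matrix.one_mul, Matrix.trace_smul, hTPB, hYb, smul_zero]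
      rw [this, mul_zero]
    rw [huAA, hRHS]
    have : ∀ i j : Fin 3, ‖A i j‖ ^ 2 + ‖B i j‖ ^ 2 = ‖A i j‖ ^ 2 := by
      intro i j; rw [hB0]; simp
    simp only [this]
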